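/- For almost every real number α (with respect to Lebesgue measure on ℝ): 2^n·α is not an integer multiple of π for any natural number n, and the set {cot(2^n·α) : n ∈ ℕ} is dense in ℝ. (Equivalently, with M = (0,1) and N = (0,−1), for almost all choices of a starting point Q₁ = (cot α, 0) on the x-axis, the closure of the sequence defined by Q_{j+1} = circumcenter(M, N, Q_j) is the entire x-axis.) -/

import Mathlib

open Real MeasureTheory Set

noncomputable section

local instance : Fact (0 < π) := ⟨Real.pi_pos⟩

lemma cot_eq_tan' (x : ℝ) : Real.cot x = Real.tan (π/2 - x) := by
  rw [Real.tan_pi_div_two_sub, Real.cot_eq_cos_div_sin, Real.tan_eq_sin_div_cos, inv_div]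

lemma cot_periodic : Function.Periodic Real.cot π := by
  intro x
  rw [Real.cot_eq_cos_div_sin, Real.cot_eq_cos_div_sin,
    Real.cos_antiperiodic x, Real.sin_antiperiodic x, neg_div_neg_eq]

lemma cot_strictAnti {x y : ℝ} (hx : 0 < x) (hxy : x < y) (hy : y < π) :
    Real.cot y < Real.cot x := by
  rw [cot_eq_tan', cot_eq_tan']
  have hpi := Real.pi_pos
  exact Real.strictMonoOn_tan ⟨by linarith, by linarith⟩ ⟨by linarith, by linarith⟩ (by linarith)

lemma cot_pi_div_two_sub_arctan (y : ℝ) : Real.cot (π/2 - Real.arctan y) = y := by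
  rw [cot_eq_tan']; ring_nf; rw [Real.tan_arctan]

lemma iterate_two_smul (n : ℕ) (x : AddCircle π) :
    (fun y : AddCircle π => (2 : ℕ) • y)^[n] x = (2 ^ n : ℕ) • x := by
  induction n with
  | zero => simp
  | succ n ih => rw [Function.iterate_succ_apply', ih, smul_smul, pow_succ, Nat.mul_comm]

/-- Ergodicity of doubling: a.e. point's orbit hits any fixed nonempty open set. -/
lemma ae_orbit_hits (U : Set (AddCircle π)) (hU : IsOpen U) (hne : U.Nonempty) :
    ∀ᵐ x ∂(volume : Measure (AddCircle π)), ∃ n : ℕ, (2 ^ n : ℕ) • x ∈ U := by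
  set f : AddCircle π → AddCircle π := fun y => (2 : ℕ) • y with hf
  have herg : Ergodic f volume := AddCircle.ergodic_nsmul (by norm_num)
  set A : Set (AddCircle π) := ⋂ n : ℕ, f^[n] ⁻¹' Uᶜ with hA
  have hAm : MeasurableSet A :=
    MeasurableSet.iInter fun n => (herg.measurable.iterate n) hU.measurableSet.compl
  have hsub : A ⊆ f ⁻¹' A := by
    intro x hx
    simp only [hA, mem_iInter, mem_preimage] at hx ⊢
    intro n
    rw [← Function.iterate_succ_apply]
    exact hx (n + 1)
  rcases herg.ae_empty_or_univ_of_ae_le_preimage hAm.nullMeasurableSet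
      (HasSubset.Subset.eventuallyLE hsub) with h | h
  · have : ∀ᵐ x ∂(volume : Measure (AddCircle π)), x ∉ A := by
      have := MeasureTheory.ae_eq_set.mp h
      rw [ae_iff]
      simpa using this.1
    filter_upwards [this] with x hx
    simp only [hA, mem_iInter, mem_preimage, mem_compl_iff, not_forall, not_not] at hx
    obtain ⟨n, hn⟩ := hx
    exact ⟨n, by rwa [iterate_two_smul] at hn⟩
  · exfalso
    have hU0 : (volume : Measure (AddCircle π)) U ≠ 0 :=
      (hU.measure_pos volume hne).ne'
    have hAU : A ⊆ Uᶜ := fun x hx => by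
      have := mem_iInter.mp hx 0
      simpa using this
    have h1 : (volume : Measure (AddCircle π)) A = volume (univ : Set (AddCircle π)) :=
      measure_congr h
    have h2 : volume (univ : Set (AddCircle π)) ≤ volume Uᶜ := h1 ▸ measure_mono hAU
    have huniv0 : (volume : Measure (AddCircle π)) univ ≠ 0 :=
      fun h0 => hU0 (le_antisymm (h0 ▸ measure_mono (subset_univ U)) zero_le)
    have hc : volume Uᶜ < volume (univ : Set (AddCircle π)) := by
      rw [measure_compl hU.measurableSet (measure_ne_top volume U)]
      exact ENNReal.sub_lt_self (measure_ne_top _ _) huniv0 hU0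
    exact absurd h2 (not_le.mpr hc)

section Extra

lemma ae_real_of_ae_circle {P : AddCircle π → Prop}
    (h : ∀ᵐ x ∂(volume : Measure (AddCircle π)), P x) :
    ∀ᵐ (α : ℝ) ∂(volume : Measure ℝ), P (α : AddCircle π) := by
  rw [ae_iff] at h ⊢
  have hcov : {α : ℝ | ¬ P (α : AddCircle π)} ⊆
      ⋃ k : ℤ, ({α : ℝ | ¬ P (α : AddCircle π)} ∩ Ioc ((k : ℝ) * π) ((k : ℝ) * π + π)) := by
    intro α hα
    obtain ⟨k, hk, -⟩ := existsUnique_add_zsmul_mem_Ioc Real.pi_pos α 0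
    simp only [mem_Ioc, zero_add, zsmul_eq_mul] at hk
    refine mem_iUnion.2 ⟨-k, hα, ?_⟩
    push_cast
    constructor <;> linarith [hk.1, hk.2]
  refine measure_mono_null hcov (measure_iUnion_null fun k => ?_)
  have hmp := AddCircle.measurePreserving_mk π ((k : ℝ) * π)
  have h0 : (volume.restrict (Ioc ((k : ℝ) * π) ((k : ℝ) * π + π)))
      (((↑) : ℝ → AddCircle π) ⁻¹' {x | ¬ P x}) = 0 :=
    hmp.quasiMeasurePreserving.preimage_null h
  rwa [Measure.restrict_apply' measurableSet_Ioc] at h0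

lemma coe_pow_mul (n : ℕ) (α : ℝ) :
    ((2 ^ n : ℕ) • (↑α : AddCircle π)) = ((((2 : ℝ) ^ n * α) : ℝ) : AddCircle π) := by
  have : ((2 : ℝ) ^ n * α) = (2 ^ n : ℕ) • α := by push_cast [nsmul_eq_mul]; ring
  rw [this]
  exact ((QuotientAddGroup.mk' (AddSubgroup.zmultiples π)).map_nsmul (2 ^ n) α).symm

lemma ae_hits_Ioo (p q : ℝ) (hpq : p < q) :
    ∀ᵐ α ∂(volume : Measure ℝ), ∃ n : ℕ, Real.cot ((2 : ℝ) ^ n * α) ∈ Ioo p q := by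
  set c : ℝ := π/2 - Real.arctan q with hc
  set d : ℝ := π/2 - Real.arctan p with hd
  have haq := Real.arctan_lt_pi_div_two q
  have hap := Real.neg_pi_div_two_lt_arctan p
  have hc0 : 0 < c := by simp only [hc]; linarith
  have hcd : c < d := by
    simp only [hc, hd]
    have := Real.arctan_strictMono hpq
    linarith
  have hdpi : d < π := by simp only [hd]; linarith
  set U : Set (AddCircle π) := ((↑) : ℝ → AddCircle π) '' Ioo c d with hUdef
  have hUo : IsOpen U := QuotientAddGroup.isOpenMap_coe _ isOpen_Ioo
  have hUne : U.Nonempty := (nonempty_Ioo.2 hcd).image _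
  have key := ae_real_of_ae_circle (ae_orbit_hits U hUo hUne)
  filter_upwards [key] with α hα
  obtain ⟨n, hn⟩ := hα
  rw [coe_pow_mul] at hn
  obtain ⟨w, hw, hwe⟩ := hn
  rw [QuotientAddGroup.eq_iff_sub_mem, AddSubgroup.mem_zmultiples_iff] at hwe
  obtain ⟨k, hk⟩ := hwe
  have hz : (2 : ℝ) ^ n * α = w - k • π := by linarith [hk]
  refine ⟨n, ?_⟩
  rw [hz, cot_periodic.sub_zsmul_eq]
  have h1 : Real.cot w < Real.cot c := cot_strictAnti hc0 hw.1 (hw.2.trans hdpi)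
  have h2 : Real.cot d < Real.cot w := cot_strictAnti (hc0.trans hw.1) hw.2 hdpi
  rw [hc, cot_pi_div_two_sub_arctan] at h1
  rw [hd, cot_pi_div_two_sub_arctan] at h2
  exact ⟨h2, h1⟩

end Extra

end

/-- For almost every real α, the numbers 2ⁿ·α are never integer multiples of π,
and the set {cot(2ⁿ·α) : n ∈ ℕ} is dense in ℝ. -/
theorem ae_cot_doubling_dense :
    ∀ᵐ α ∂(volume : Measure ℝ),
      (∀ n : ℕ, ∀ m : ℤ, (2 : ℝ) ^ n * α ≠ m * π) ∧
      Dense (Set.range fun n : ℕ => Real.cot ((2 : ℝ) ^ n * α)) := by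
  have h1 : ∀ᵐ α ∂(volume : Measure ℝ), ∀ n : ℕ, ∀ m : ℤ, (2 : ℝ) ^ n * α ≠ m * π := by
    have hnull : (volume : Measure ℝ) (⋃ (n : ℕ), ⋃ (m : ℤ), {((m : ℝ) * π / 2 ^ n)}) = 0 :=
      measure_iUnion_null fun n => measure_iUnion_null fun m => volume_singleton
    rw [ae_iff]
    refine measure_mono_null ?_ hnull
    intro α hα
    simp only [not_forall, not_ne_iff, mem_setOf_eq] at hα
    obtain ⟨n, m, hnm⟩ := hα
    simp only [mem_iUnion, mem_singleton_iff]
    exact ⟨n, m, by rw [eq_div_iff (by positivity : ((2:ℝ)^n) ≠ 0)]; linarith⟩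
  have h2 : ∀ᵐ α ∂(volume : Measure ℝ), ∀ p q : ℚ, (p : ℝ) < (q : ℝ) →
      ∃ n : ℕ, Real.cot ((2 : ℝ) ^ n * α) ∈ Ioo (p : ℝ) (q : ℝ) := by
    rw [ae_all_iff]; intro p; rw [ae_all_iff]; intro q
    by_cases hpq : (p : ℝ) < (q : ℝ)
    · filter_upwards [ae_hits_Ioo (p : ℝ) (q : ℝ) hpq] with α hα _
      exact hα
    · filter_upwards with α h
      exact absurd h hpq
  filter_upwards [h1, h2] with α hα1 hα2
  refine ⟨hα1, ?_⟩
  rw [dense_iff_inter_open]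
  rintro V hV ⟨y, hy⟩
  obtain ⟨ε, hε, hball⟩ := Metric.isOpen_iff.mp hV y hy
  obtain ⟨p, hp1, hp2⟩ := exists_rat_btwn (show y - ε < y by linarith)
  obtain ⟨q, hq1, hq2⟩ := exists_rat_btwn (show y < y + ε by linarith)
  obtain ⟨n, hn⟩ := hα2 p q (by exact_mod_cast hp2.trans hq1)
  refine ⟨Real.cot ((2 : ℝ) ^ n * α), hball ?_, ⟨n, rfl⟩⟩
  rw [Real.ball_eq_Ioo]
  exact ⟨by linarith [hn.1], by linarith [hn.2]⟩
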